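/- Let G be a topological group, W a topological space, Q a group, ρ : Q → Homeo(W) a group homomorphism into the self-homeomorphisms of W, φ̃ : Q → Aut(G) a function taking values in continuous automorphisms of G, and f : Q × Q → G, such that (φ̃, f) is a factor set for (G,Q). Suppose λ : Q → M(W,G) is a function into the continuous maps W → G satisfying, for all α,β ∈ Q and all w ∈ W: f(α,β) = φ̃(α)(λ(β)(ρ(α)⁻¹(w))) · λ(α)(w) · (λ(αβ)(w))⁻¹. Then the map θ assigning to (a,α) ∈ G ×_{(f,φ̃)} Q the self-homeomorphism of G × W given by θ(a,α)(x,w) = (a·φ̃(α)(x)·λ(α)(ρ(α)(w)), ρ(α)(w)) is a group homomorphism from G ×_{(f,φ̃)} Q into the group of self-homeomorphisms of G × W, and θ(a,1) = ℓ(a) for all a ∈ G. -/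

import Mathlib

/-- Given: a topological group `G`, a space `W`, a group `Q`, an action
`ρ : Q → Homeo(W)` (a group homomorphism, encoded by `ρ 1 = id` and
`ρ (α·β) = ρ α ∘ ρ β`), a function `φ̃ : Q → Aut(G)` with values in continuous
automorphisms of `G`, and `f : Q × Q → G` so that `(φ̃, f)` is a factor set;
and a map `λ : Q → M(W,G)` with
`f(α,β) = φ̃(α)(λ(β)(ρ(α)⁻¹ w)) · λ(α)(w) · (λ(αβ)(w))⁻¹` for all `w`.
Then `θ(a,α) : (x,w) ↦ (a·φ̃(α)(x)·λ(α)(ρ(α)(w)), ρ(α)(w))` is a self-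
homeomorphism of `G × W` for every `(a,α)`, the assignment
`θ : G ×_{(f,φ̃)} Q → TOP(G × W)` is a group homomorphism (it carries the
extension multiplication `(a,α)(b,β) = (a·φ̃(α)(b)·f(α,β), αβ)` to
composition), and `θ(a,1) = ℓ(a)` is left translation by `a`. -/
theorem seifert_construction_homomorphism
    {G W Q : Type*} [Group G] [TopologicalSpace G] [IsTopologicalGroup G]
    [TopologicalSpace W] [Group Q]
    (ρ : Q → W ≃ₜ W) (hρ1 : ρ 1 = Homeomorph.refl W)
    (hρmul : ∀ α β : Q, ∀ w : W, ρ (α * β) w = ρ α (ρ β w))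
    (φ : Q → G ≃ₜ G) (hφmul : ∀ (α : Q) (x y : G), φ α (x * y) = φ α x * φ α y)
    (f : Q × Q → G)
    (h31 : ∀ (α β : Q) (x : G),
      φ α (φ β x) = f (α, β) * φ (α * β) x * (f (α, β))⁻¹)
    (h32 : ∀ α : Q, f (α, 1) = 1) (h32' : ∀ β : Q, f (1, β) = 1)
    (h33 : ∀ α β γ : Q,
      f (α, β) * f (α * β, γ) = φ α (f (β, γ)) * f (α, β * γ))
    (lam : Q → C(W, G))
    (hlam : ∀ (α β : Q) (w : W),
      f (α, β) = φ α (lam β ((ρ α).symm w)) * lam α w * (lam (α * β) w)⁻¹) :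
    (∀ p : G × Q, ∃ g : (G × W) ≃ₜ (G × W),
        ⇑g = fun x : G × W =>
          (p.1 * φ p.2 x.1 * lam p.2 (ρ p.2 x.2), ρ p.2 x.2)) ∧
    (∀ p q : G × Q,
        (fun x : G × W =>
          ((p.1 * φ p.2 q.1 * f (p.2, q.2)) * φ (p.2 * q.2) x.1 *
              lam (p.2 * q.2) (ρ (p.2 * q.2) x.2),
            ρ (p.2 * q.2) x.2)) =
        (fun x : G × W =>
          (p.1 * φ p.2 x.1 * lam p.2 (ρ p.2 x.2), ρ p.2 x.2)) ∘
        (fun x : G × W =>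
          (q.1 * φ q.2 x.1 * lam q.2 (ρ q.2 x.2), ρ q.2 x.2))) ∧
    (∀ a : G,
        (fun x : G × W =>
          (a * φ (1 : Q) x.1 * lam 1 (ρ 1 x.2), ρ (1 : Q) x.2)) =
        fun x : G × W => (a * x.1, x.2)) := by
  have hφ1 : ∀ x : G, φ (1 : Q) x = x := by
    intro x
    have h := h31 1 1 x
    simp only [h32, one_mul, mul_one, inv_one] at h
    exact (φ (1 : Q)).injective h
  have hlam1 : ∀ w : W, lam (1 : Q) w = 1 := by
    intro w
    have h := hlam 1 1 w
    simp only [h32, one_mul, mul_inv_cancel_right, hρ1, Homeomorph.refl_symm,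
      Homeomorph.refl_apply, hφ1] at h
    exact h.symm
  refine ⟨?_, ?_, ?_⟩
  · rintro ⟨a, α⟩
    refine ⟨⟨⟨fun x => (a * φ α x.1 * lam α (ρ α x.2), ρ α x.2),
      fun y => ((φ α).symm (a⁻¹ * y.1 * (lam α y.2)⁻¹), (ρ α).symm y.2),
      ?_, ?_⟩, ?_, ?_⟩, rfl⟩
    · intro x
      refine Prod.ext ?_ ((ρ α).symm_apply_apply _)
      have h : a⁻¹ * (a * φ α x.1 * lam α (ρ α x.2)) * (lam α (ρ α x.2))⁻¹
          = φ α x.1 := by group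
      simpa [h] using (φ α).symm_apply_apply x.1
    · intro y
      refine Prod.ext ?_ ((ρ α).apply_symm_apply _)
      simp only [(φ α).apply_symm_apply, (ρ α).apply_symm_apply]
      group
    · exact ((continuous_const.mul ((φ α).continuous.comp continuous_fst)).mul
        ((lam α).continuous.comp ((ρ α).continuous.comp continuous_snd))).prodMk
        ((ρ α).continuous.comp continuous_snd)
    · exact (((φ α).symm.continuous.comp ((continuous_const.mul continuous_fst).mul
        (((lam α).continuous.comp continuous_snd).inv))).prodMk
        ((ρ α).symm.continuous.comp continuous_snd))
  · rintro ⟨a, α⟩ ⟨b, β⟩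
    funext x
    obtain ⟨x1, w⟩ := x
    refine Prod.ext ?_ (hρmul α β w)
    simp only [Function.comp]
    have hw' : (ρ α).symm (ρ α (ρ β w)) = ρ β w := (ρ α).symm_apply_apply _
    have hf := hlam α β (ρ α (ρ β w))
    rw [hw'] at hf
    rw [hρmul α β w, hφmul, hφmul, h31, hf]
    group
  · intro a
    funext x
    simp [hφ1, hlam1, hρ1]
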